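/- In a two-group slot allocation setting where group h has value function Alg_h over sets of slots (defined as the sum over slots, assigned in decreasing click-through-rate order, of α_{j,h}·γ_h·b_i for the top bidders of group h), the group envy-cycle-elimination algorithm — which iterates over slots in decreasing click-through-rate order, swapping the two groups' current bundles J_h and J_ℓ whenever Alg_h(J_h) < β·Alg_h(J_ℓ) and Alg_ℓ(J_ℓ) < β·Alg_ℓ(J_h), and then assigning the next slot to group h if Alg_ℓ(J_ℓ) ≥ β·Alg_ℓ(J_h) and to group ℓ otherwise — produces an allocation (J_h, J_ℓ) that is group β-EFX: for each pair of groups g, g' and every item x ∈ J_{g'}, Alg_g(J_g) ≥ β·Alg_g(J_{g'} \ {x}). -/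

import Mathlib

/-!
STATEMENT 0: The group envy-cycle-elimination (GECE) algorithm produces a
group β-EFX allocation of the slots between two groups h and ℓ.
-/

/-- Value obtained by a group from a set of slots `J`: slots are taken in
increasing index order (decreasing click-through rate), and the `k`-th best
slot is paired with the `k`-th highest bidder of the group:
`Alg_g(J) = Σ_{k<|J|} α_{J(k),g} · γ_g · b_{I_g(k)}`. -/
noncomputable def algVal (α : ℕ → ℝ) (γ : ℝ) (b : ℕ → ℝ) (J : Finset ℕ) : ℝ :=
  ∑ k ∈ Finset.range J.card, α ((J.sort (· ≤ ·)).getD k 0) * γ * b k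

open scoped Classical

/-- One step of the group envy-cycle-elimination algorithm on slot `j`:
swap the two bundles if the groups mutually envy each other, then give the
next slot to group `h` if group `ℓ` does not envy group `h`, else to `ℓ`. -/
noncomputable def geceStep (vh vl : Finset ℕ → ℝ) (β : ℝ)
    (p : Finset ℕ × Finset ℕ) (j : ℕ) : Finset ℕ × Finset ℕ :=
  let q := if vh p.1 < β * vh p.2 ∧ vl p.2 < β * vl p.1 then (p.2, p.1) else p
  if β * vl q.1 ≤ vl q.2 then (insert j q.1, q.2) else (q.1, insert j q.2)

/-- The GECE algorithm: iterate over slots `0,…,n-1` in decreasing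
click-through-rate order (increasing index). -/
noncomputable def gece (vh vl : Finset ℕ → ℝ) (β : ℝ) (n : ℕ) :
    Finset ℕ × Finset ℕ :=
  (List.range n).foldl (geceStep vh vl β) (∅, ∅)


noncomputable def kth (J : Finset ℕ) (k : ℕ) : ℕ := (J.sort (· ≤ ·)).getD k 0

lemma kth_le_kth {J' J : Finset ℕ} (h : J' ⊆ J) {k : ℕ} (hk : k < J'.card) :
    kth J k ≤ kth J' k := by
  have hsub : List.Sublist (J'.sort (· ≤ ·)) (J.sort (· ≤ ·)) :=
    List.sublist_of_subperm_of_pairwise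
      (List.subperm_of_subset (Finset.sort_nodup _ _)
        (fun x hx => (Finset.mem_sort _).2 (h ((Finset.mem_sort _).1 hx))))
      (Finset.pairwise_sort _ _) (Finset.pairwise_sort _ _)
  obtain ⟨f, hf⟩ := List.sublist_iff_exists_orderEmbedding_getElem?_eq.mp hsub
  have hk' : k < (J'.sort (· ≤ ·)).length := by rwa [Finset.length_sort]
  have h1 := hf k
  rw [List.getElem?_eq_getElem hk'] at h1
  have hfk : f k < (J.sort (· ≤ ·)).length := by
    by_contra hc
    rw [List.getElem?_eq_none (le_of_not_gt hc)] at h1; exact absurd h1 (by simp)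
  rw [List.getElem?_eq_getElem hfk] at h1
  have hkfk : k ≤ f k := f.strictMono.le_apply
  have hkl : k < (J.sort (· ≤ ·)).length := lt_of_le_of_lt hkfk hfk
  have hsorted := (Finset.pairwise_sort J (· ≤ ·)).rel_get_of_le
    (a := ⟨k, hkl⟩) (b := ⟨f k, hfk⟩) hkfk
  unfold kth
  simp only [List.getD_eq_getElem?_getD, List.getElem?_eq_getElem hk', List.getElem?_eq_getElem hkl,
    Option.getD_some]
  rw [Option.some_inj] at h1
  simp only [List.get_eq_getElem] at hsorted
  rw [← h1] at hsorted
  exact hsorted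

section Facts

variable {α : ℕ → ℝ} {γ : ℝ} {b : ℕ → ℝ}
variable (hα : ∀ s t, s ≤ t → α t ≤ α s) (hα0 : ∀ s, 0 ≤ α s)
  (hγ0 : 0 ≤ γ) (hb0 : ∀ i, 0 ≤ b i)

include hα0 hγ0 hb0 in
lemma algVal_nonneg (J : Finset ℕ) : 0 ≤ algVal α γ b J := by
  apply Finset.sum_nonneg
  intro k _
  exact mul_nonneg (mul_nonneg (hα0 _) hγ0) (hb0 _)

include hα hα0 hγ0 hb0 in
lemma algVal_dom {J' J : Finset ℕ} (hcard : J'.card ≤ J.card)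
    (hkth : ∀ k < J'.card, kth J k ≤ kth J' k) :
    algVal α γ b J' ≤ algVal α γ b J := by
  unfold algVal
  calc ∑ k ∈ Finset.range J'.card, α ((J'.sort (· ≤ ·)).getD k 0) * γ * b k
      ≤ ∑ k ∈ Finset.range J'.card, α ((J.sort (· ≤ ·)).getD k 0) * γ * b k := by
        apply Finset.sum_le_sum
        intro k hk
        rw [Finset.mem_range] at hk
        exact mul_le_mul_of_nonneg_right
          (mul_le_mul_of_nonneg_right (hα _ _ (hkth k hk)) hγ0) (hb0 _)
    _ ≤ ∑ k ∈ Finset.range J.card, α ((J.sort (· ≤ ·)).getD k 0) * γ * b k := by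
        apply Finset.sum_le_sum_of_subset_of_nonneg
          (Finset.range_subset_range.2 hcard)
        intro k _ _
        exact mul_nonneg (mul_nonneg (hα0 _) hγ0) (hb0 _)

include hα hα0 hγ0 hb0 in
lemma algVal_mono {J' J : Finset ℕ} (h : J' ⊆ J) :
    algVal α γ b J' ≤ algVal α γ b J :=
  algVal_dom hα hα0 hγ0 hb0 (Finset.card_le_card h) (fun _ hk => kth_le_kth h hk)

lemma sort_insert_max {J : Finset ℕ} {j : ℕ} (hJ : ∀ s ∈ J, s < j) :
    (insert j J).sort (· ≤ ·) = J.sort (· ≤ ·) ++ [j] := by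
  have hjJ : j ∉ J := fun h => lt_irrefl j (hJ j h)
  have h1 : ((insert j J).sort (· ≤ ·)).Perm (j :: J.sort (· ≤ ·)) := by
    refine (List.perm_ext_iff_of_nodup (Finset.sort_nodup _ _) ?_).2 ?_
    · exact List.nodup_cons.2 ⟨fun h => hjJ ((Finset.mem_sort _).1 h),
        Finset.sort_nodup _ _⟩
    · intro a
      simp [Finset.mem_sort, Finset.mem_insert]
  refine List.Perm.eq_of_pairwise' (r := (· ≤ ·)) (Finset.pairwise_sort _ _) ?_
    (h1.trans (List.perm_append_singleton j (J.sort (· ≤ ·))).symm)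
  · rw [List.pairwise_append]
    refine ⟨Finset.pairwise_sort _ _, List.pairwise_singleton _ j, ?_⟩
    intro a ha c hc
    rw [List.mem_singleton] at hc
    subst hc
    exact le_of_lt (hJ a ((Finset.mem_sort _).1 ha))

include hα hα0 hγ0 hb0 in
lemma algVal_erase_insert {J : Finset ℕ} {j x : ℕ} (hJ : ∀ s ∈ J, s < j)
    (hx : x ∈ insert j J) :
    algVal α γ b ((insert j J).erase x) ≤ algVal α γ b J := by
  have hjJ : j ∉ J := fun h => lt_irrefl j (hJ j h)
  rcases Finset.mem_insert.1 hx with rfl | hxJ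
  · rw [Finset.erase_insert hjJ]
  · have hcard : ((insert j J).erase x).card = J.card := by
      rw [Finset.card_erase_of_mem hx, Finset.card_insert_of_notMem hjJ]
      simp
    apply algVal_dom hα hα0 hγ0 hb0 (le_of_eq hcard)
    intro k hk
    have h1 : kth (insert j J) k ≤ kth ((insert j J).erase x) k :=
      kth_le_kth (Finset.erase_subset _ _) hk
    rw [hcard] at hk
    have h2 : kth (insert j J) k = kth J k := by
      unfold kth
      rw [sort_insert_max hJ,
        List.getD_append _ _ _ _ (by rwa [Finset.length_sort])]
    rw [← h2]
    exact h1

end Facts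

def GInv (vh vl : Finset ℕ → ℝ) (β : ℝ) (m : ℕ) (p : Finset ℕ × Finset ℕ) : Prop :=
  (∀ x ∈ p.2, β * vh (p.2.erase x) ≤ vh p.1) ∧
  (∀ x ∈ p.1, β * vl (p.1.erase x) ≤ vl p.2) ∧
  (∀ s ∈ p.1, s < m) ∧ (∀ s ∈ p.2, s < m)

lemma step_core (vh vl : Finset ℕ → ℝ) {β : ℝ} (m : ℕ)
    (hvh0 : ∀ J, 0 ≤ vh J) (hvl0 : ∀ J, 0 ≤ vl J)
    (hvhmono : ∀ {J' J : Finset ℕ}, J' ⊆ J → vh J' ≤ vh J)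
    (hvlmono : ∀ {J' J : Finset ℕ}, J' ⊆ J → vl J' ≤ vl J)
    (hvhkey : ∀ {J : Finset ℕ} {x : ℕ}, (∀ s ∈ J, s < m) → x ∈ insert m J →
      vh ((insert m J).erase x) ≤ vh J)
    (hvlkey : ∀ {J : Finset ℕ} {x : ℕ}, (∀ s ∈ J, s < m) → x ∈ insert m J →
      vl ((insert m J).erase x) ≤ vl J)
    (hβ0 : 0 < β) (hβ1 : β ≤ 1)
    (p : Finset ℕ × Finset ℕ) (hp : GInv vh vl β m p) :
    GInv vh vl β (m + 1) (geceStep vh vl β p m) := by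
  obtain ⟨h1, h2, h3, h4⟩ := hp
  -- properties of the post-swap pair q
  set q := if vh p.1 < β * vh p.2 ∧ vl p.2 < β * vl p.1 then (p.2, p.1) else p
    with hqdef
  have hq : (∀ x ∈ q.2, β * vh (q.2.erase x) ≤ vh q.1) ∧
      (∀ x ∈ q.1, β * vl (q.1.erase x) ≤ vl q.2) ∧
      (∀ s ∈ q.1, s < m) ∧ (∀ s ∈ q.2, s < m) ∧
      (vl q.2 < β * vl q.1 → β * vh q.2 ≤ vh q.1) := by
    by_cases hswap : vh p.1 < β * vh p.2 ∧ vl p.2 < β * vl p.1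
    · rw [hqdef, if_pos hswap]
      obtain ⟨hs1, hs2⟩ := hswap
      refine ⟨?_, ?_, h4, h3, ?_⟩
      · intro x hx
        have e1 : vh (p.1.erase x) ≤ vh p.1 := hvhmono (Finset.erase_subset _ _)
        nlinarith [hvh0 (p.1.erase x), hvh0 p.1, hvh0 p.2]
      · intro x hx
        have e1 : vl (p.2.erase x) ≤ vl p.2 := hvlmono (Finset.erase_subset _ _)
        nlinarith [hvl0 (p.2.erase x), hvl0 p.1, hvl0 p.2]
      · intro _
        nlinarith [hvh0 p.1, hvh0 p.2]
    · rw [hqdef, if_neg hswap]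
      refine ⟨h1, h2, h3, h4, ?_⟩
      intro hc
      rcases not_and_or.1 hswap with hno | hno
      · exact le_of_not_gt hno
      · exact absurd hc hno
  obtain ⟨q1, q2, q3, q4, qx⟩ := hq
  have hstep : geceStep vh vl β p m =
      if β * vl q.1 ≤ vl q.2 then (insert m q.1, q.2) else (q.1, insert m q.2) := by
    rw [geceStep]
  rw [hstep]
  by_cases hgive : β * vl q.1 ≤ vl q.2
  · rw [if_pos hgive]
    refine ⟨?_, ?_, ?_, ?_⟩
    · intro x hx
      exact (q1 x hx).trans (hvhmono (Finset.subset_insert _ _))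
    · intro x hx
      calc β * vl ((insert m q.1).erase x) ≤ β * vl q.1 :=
            mul_le_mul_of_nonneg_left (hvlkey q3 hx) hβ0.le
        _ ≤ vl q.2 := hgive
    · intro s hs
      rcases Finset.mem_insert.1 hs with rfl | hs
      · omega
      · exact (q3 s hs).trans (Nat.lt_succ_self m)
    · intro s hs; exact (q4 s hs).trans (Nat.lt_succ_self m)
  · rw [if_neg hgive]
    have hc : vl q.2 < β * vl q.1 := lt_of_not_ge hgive
    have hqx := qx hc
    refine ⟨?_, ?_, ?_, ?_⟩
    · intro x hx
      calc β * vh ((insert m q.2).erase x) ≤ β * vh q.2 :=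
            mul_le_mul_of_nonneg_left (hvhkey q4 hx) hβ0.le
        _ ≤ vh q.1 := hqx
    · intro x hx
      exact (q2 x hx).trans (hvlmono (Finset.subset_insert _ _))
    · intro s hs; exact (q3 s hs).trans (Nat.lt_succ_self m)
    · intro s hs
      rcases Finset.mem_insert.1 hs with rfl | hs
      · omega
      · exact (q4 s hs).trans (Nat.lt_succ_self m)

/-- The allocation `(J_h, J_ℓ)` computed by GECE is group β-EFX: for each
group and every item `x` in the other group's bundle,
`Alg_g(J_g) ≥ β · Alg_g(J_{g'} \ {x})`. -/
theorem gece_group_beta_EFX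
    (αh αl : ℕ → ℝ) (γh γl : ℝ) (bh bl : ℕ → ℝ) (β : ℝ) (n : ℕ)
    (Jh Jl : Finset ℕ)
    (hαh : ∀ s t, s ≤ t → αh t ≤ αh s) (hαl : ∀ s t, s ≤ t → αl t ≤ αl s)
    (hαh0 : ∀ s, 0 ≤ αh s) (hαl0 : ∀ s, 0 ≤ αl s)
    (hγh : γh ∈ Set.Icc (0 : ℝ) 1) (hγl : γl ∈ Set.Icc (0 : ℝ) 1)
    (hbh0 : ∀ i, 0 ≤ bh i) (hbl0 : ∀ i, 0 ≤ bl i)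
    (hbh : ∀ i j, i ≤ j → bh j ≤ bh i) (hbl : ∀ i j, i ≤ j → bl j ≤ bl i)
    (hβ0 : 0 < β) (hβ1 : β ≤ 1)
    (hJ : (Jh, Jl) = gece (algVal αh γh bh) (algVal αl γl bl) β n) :
    (∀ x ∈ Jl, β * algVal αh γh bh (Jl.erase x) ≤ algVal αh γh bh Jh) ∧
    (∀ x ∈ Jh, β * algVal αl γl bl (Jh.erase x) ≤ algVal αl γl bl Jl) := by
  set vh := algVal αh γh bh with hvh
  set vl := algVal αl γl bl with hvl
  have hγh0 : (0:ℝ) ≤ γh := hγh.1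
  have hγl0 : (0:ℝ) ≤ γl := hγl.1
  have hinv : ∀ m, GInv vh vl β m (gece vh vl β m) := by
    intro m
    induction m with
    | zero =>
      refine ⟨?_, ?_, ?_, ?_⟩ <;> · intro x hx; simp [gece] at hx
    | succ m ih =>
      have : gece vh vl β (m + 1) = geceStep vh vl β (gece vh vl β m) m := by
        rw [gece, gece, List.range_succ, List.foldl_append, List.foldl_cons,
          List.foldl_nil]
      rw [this]
      exact step_core vh vl m
        (algVal_nonneg hαh0 hγh0 hbh0) (algVal_nonneg hαl0 hγl0 hbl0)
        (fun h => algVal_mono hαh hαh0 hγh0 hbh0 h)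
        (fun h => algVal_mono hαl hαl0 hγl0 hbl0 h)
        (fun hJ hx => algVal_erase_insert hαh hαh0 hγh0 hbh0 hJ hx)
        (fun hJ hx => algVal_erase_insert hαl hαl0 hγl0 hbl0 hJ hx)
        hβ0 hβ1 _ ih
  obtain ⟨i1, i2, -, -⟩ := hinv n
  have e1 : Jh = (gece vh vl β n).1 := by rw [← hJ]
  have e2 : Jl = (gece vh vl β n).2 := by rw [← hJ]
  rw [e1, e2]
  exact ⟨i1, i2⟩
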